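/- The limit as m → ∞ (with n = 4m) of 4·(∑_{k=1}^{n/4} (cos((2k-1)π/(2n-2)) − cos(kπ/(n+1))) + ∑_{k=n/4+1}^{n/2} (cos(kπ/(n+1)) − cos((2k-1)π/(2n-2)))) equals (8 − 8√2 + 2π)/π. -/

import Mathlib

open Real Filter Finset

lemma sumA (θ : ℝ) (M : ℕ) :
    (∑ k ∈ Finset.Ioc 0 M, Real.cos ((2 * (k:ℝ) - 1) * θ)) * (2 * Real.sin θ)
      = Real.sin (2 * M * θ) := by
  induction M with
  | zero => simp
  | succ n ih =>
      rw [Finset.sum_Ioc_succ_top (Nat.zero_le _), add_mul, ih]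
      have h := Real.sin_sub_sin (2 * ((n:ℝ)+1) * θ) (2 * (n:ℝ) * θ)
      push_cast
      rw [show (2 * ((n:ℝ)+1) * θ - 2 * (n:ℝ) * θ)/2 = θ by ring,
          show (2 * ((n:ℝ)+1) * θ + 2 * (n:ℝ) * θ)/2 = (2*((n:ℝ)+1) - 1) * θ by ring] at h
      linarith [h]

lemma sumB (θ : ℝ) (M : ℕ) :
    (∑ k ∈ Finset.Ioc 0 M, Real.cos ((k:ℝ) * θ)) * (2 * Real.sin (θ/2))
      = Real.sin (((M:ℝ) + 1/2) * θ) - Real.sin (θ/2) := by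
  induction M with
  | zero =>
      simp only [Finset.Ioc_self, Finset.sum_empty, zero_mul, Nat.cast_zero]
      rw [show ((0:ℝ) + 1/2) * θ = θ/2 by ring, sub_self]
  | succ n ih =>
      rw [Finset.sum_Ioc_succ_top (Nat.zero_le _), add_mul, ih]
      have h := Real.sin_sub_sin (((n:ℝ)+1+1/2) * θ) (((n:ℝ)+1/2) * θ)
      push_cast
      rw [show ((((n:ℝ)+1+1/2) * θ - ((n:ℝ)+1/2) * θ))/2 = θ/2 by ring,
          show ((((n:ℝ)+1+1/2) * θ + ((n:ℝ)+1/2) * θ))/2 = ((n:ℝ)+1) * θ by ring] at h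
      linarith [h]

lemma sinc_nhds : Tendsto (fun x : ℝ => Real.sin x / x) (nhdsWithin 0 {(0:ℝ)}ᶜ) (nhds 1) := by
  have h := hasDerivAt_iff_tendsto_slope.mp (Real.hasDerivAt_sin 0)
  simp only [Real.cos_zero] at h
  refine h.congr' ?_
  filter_upwards [self_mem_nhdsWithin] with x hx
  simp [slope_fun_def, Real.sin_zero, div_eq_inv_mul]

lemma cosc_nhds : Tendsto (fun x : ℝ => (Real.cos x - 1) / x) (nhdsWithin 0 {(0:ℝ)}ᶜ) (nhds 0) := by
  have h := hasDerivAt_iff_tendsto_slope.mp (Real.hasDerivAt_cos 0)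
  simp only [Real.sin_zero, neg_zero] at h
  refine h.congr' ?_
  filter_upwards [self_mem_nhdsWithin] with x hx
  simp [slope_fun_def, Real.cos_zero, div_eq_inv_mul]

lemma tendsto_sinc {t : ℕ → ℝ} (h0 : Tendsto t atTop (nhds 0))
    (hne : ∀ᶠ m in atTop, t m ≠ 0) :
    Tendsto (fun m => Real.sin (t m) / t m) atTop (nhds 1) := by
  exact sinc_nhds.comp (tendsto_nhdsWithin_iff.mpr ⟨h0, hne⟩)

lemma tendsto_cosc {t : ℕ → ℝ} (h0 : Tendsto t atTop (nhds 0))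
    (hne : ∀ᶠ m in atTop, t m ≠ 0) :
    Tendsto (fun m => (Real.cos (t m) - 1) / t m) atTop (nhds 0) := by
  exact cosc_nhds.comp (tendsto_nhdsWithin_iff.mpr ⟨h0, hne⟩)

noncomputable def ee1 (m : ℕ) : ℝ := Real.pi / (16 * m - 4)
noncomputable def ee2 (m : ℕ) : ℝ := Real.pi / (16 * m + 4)

noncomputable def HH (m : ℕ) : ℝ :=
  4 * ( (Real.sqrt 2 * ((Real.cos (ee1 m) - 1) / ee1 m)
          + Real.sqrt 2 * (Real.sin (ee1 m) / ee1 m)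
          - 2 * ((Real.cos (2 * ee1 m) - 1) / (2 * ee1 m)))
        / (4 * (Real.sin (2 * ee1 m) / (2 * ee1 m)))
      - (Real.sqrt 2 * ((Real.cos (ee2 m) - 1) / ee2 m)
          + Real.sqrt 2 * (Real.sin (ee2 m) / ee2 m))
        / (4 * (Real.sin (2 * ee2 m) / (2 * ee2 m)))
      + ((Real.sqrt 2 - 1) / 2 *
          (2 * Real.cos (ee1 m + ee2 m) * (Real.sin (ee2 m - ee1 m) / (ee2 m - ee1 m))
            * (-8 / Real.pi)))
        / (4 * ((Real.sin (2 * ee1 m) / (2 * ee1 m)) * (Real.sin (2 * ee2 m) / (2 * ee2 m))))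
      + 1/2 )

lemma ee1_pos {m : ℕ} (hm : 1 ≤ m) : 0 < ee1 m := by
  have : (1:ℝ) ≤ m := by exact_mod_cast hm
  unfold ee1
  apply div_pos Real.pi_pos (by linarith)

lemma ee2_pos {m : ℕ} (hm : 1 ≤ m) : 0 < ee2 m := by
  have : (1:ℝ) ≤ m := by exact_mod_cast hm
  unfold ee2
  apply div_pos Real.pi_pos (by linarith)

lemma ee1_lt {m : ℕ} (hm : 1 ≤ m) : 2 * ee1 m < Real.pi := by
  have h1 : (1:ℝ) ≤ m := by exact_mod_cast hm
  unfold ee1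
  rw [show 2 * (Real.pi / (16 * (m:ℝ) - 4)) = 2 * Real.pi / (16 * (m:ℝ) - 4) by ring,
      div_lt_iff₀ (by linarith)]
  nlinarith [Real.pi_pos]

lemma ee2_lt {m : ℕ} (hm : 1 ≤ m) : 2 * ee2 m < Real.pi := by
  have h1 : (1:ℝ) ≤ m := by exact_mod_cast hm
  unfold ee2
  rw [show 2 * (Real.pi / (16 * (m:ℝ) + 4)) = 2 * Real.pi / (16 * (m:ℝ) + 4) by ring,
      div_lt_iff₀ (by linarith)]
  nlinarith [Real.pi_pos]

lemma ee2_lt_ee1 {m : ℕ} (hm : 1 ≤ m) : ee2 m < ee1 m := by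
  have h1 : (1:ℝ) ≤ m := by exact_mod_cast hm
  unfold ee1 ee2
  apply div_lt_div_of_pos_left Real.pi_pos (by linarith) (by linarith)

lemma ee1_tendsto : Tendsto ee1 atTop (nhds 0) := by
  apply Filter.Tendsto.div_atTop (tendsto_const_nhds)
  apply tendsto_atTop_add_const_right
  exact (tendsto_natCast_atTop_atTop (R := ℝ)).const_mul_atTop (by norm_num)

lemma ee2_tendsto : Tendsto ee2 atTop (nhds 0) := by
  apply Filter.Tendsto.div_atTop (tendsto_const_nhds)
  apply tendsto_atTop_add_const_right
  exact (tendsto_natCast_atTop_atTop (R := ℝ)).const_mul_atTop (by norm_num)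

lemma hne1 : ∀ᶠ m : ℕ in atTop, ee1 m ≠ 0 := by
  filter_upwards [eventually_ge_atTop 1] with m hm
  exact ne_of_gt (ee1_pos hm)

lemma hne2 : ∀ᶠ m : ℕ in atTop, ee2 m ≠ 0 := by
  filter_upwards [eventually_ge_atTop 1] with m hm
  exact ne_of_gt (ee2_pos hm)

lemma hneδ : ∀ᶠ m : ℕ in atTop, ee2 m - ee1 m ≠ 0 := by
  filter_upwards [eventually_ge_atTop 1] with m hm
  exact ne_of_lt (sub_neg.mpr (ee2_lt_ee1 hm))

lemma tendsto_HH :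
    Tendsto HH atTop (nhds ((8 - 8 * Real.sqrt 2 + 2 * Real.pi) / Real.pi)) := by
  have h2e1 : Tendsto (fun m => 2 * ee1 m) atTop (nhds 0) := by
    simpa using ee1_tendsto.const_mul 2
  have h2e2 : Tendsto (fun m => 2 * ee2 m) atTop (nhds 0) := by
    simpa using ee2_tendsto.const_mul 2
  have h2ne1 : ∀ᶠ m : ℕ in atTop, 2 * ee1 m ≠ 0 := by
    filter_upwards [hne1] with m h; simpa using h
  have h2ne2 : ∀ᶠ m : ℕ in atTop, 2 * ee2 m ≠ 0 := by
    filter_upwards [hne2] with m h; simpa using h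
  have At1 := tendsto_sinc h2e1 h2ne1
  have At2 := tendsto_sinc h2e2 h2ne2
  have At3 := tendsto_sinc ee1_tendsto hne1
  have At4 := tendsto_sinc ee2_tendsto hne2
  have At5 := tendsto_cosc ee1_tendsto hne1
  have At6 := tendsto_cosc ee2_tendsto hne2
  have At7 := tendsto_cosc h2e1 h2ne1
  have At8 : Tendsto (fun m => Real.cos (ee1 m + ee2 m)) atTop (nhds 1) := by
    have : Tendsto (fun m => ee1 m + ee2 m) atTop (nhds 0) := by
      simpa using ee1_tendsto.add ee2_tendsto
    simpa [Function.comp_def] using (Real.continuous_cos.tendsto 0).comp this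
  have At9 := tendsto_sinc (by simpa using ee2_tendsto.sub ee1_tendsto) hneδ
  have P1 := (((At5.const_mul (Real.sqrt 2)).add (At3.const_mul (Real.sqrt 2))).sub
      (At7.const_mul 2)).div (At1.const_mul 4) (by norm_num)
  have P2 := ((At6.const_mul (Real.sqrt 2)).add (At4.const_mul (Real.sqrt 2))).div
      (At2.const_mul 4) (by norm_num)
  have Qn := ((((At8.const_mul 2).mul At9).mul
      (tendsto_const_nhds (x := (-8 / Real.pi : ℝ)))).const_mul ((Real.sqrt 2 - 1) / 2))
  have Qt := Qn.div ((At1.mul At2).const_mul 4) (by norm_num)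
  have T := ((((P1.sub P2).add Qt).add (tendsto_const_nhds (x := (1/2 : ℝ)))).const_mul 4)
  have hval : (4:ℝ) * ((Real.sqrt 2 * 0 + Real.sqrt 2 * 1 - 2 * 0) / (4 * 1)
      - (Real.sqrt 2 * 0 + Real.sqrt 2 * 1) / (4 * 1)
      + (Real.sqrt 2 - 1) / 2 * (2 * 1 * 1 * (-8 / Real.pi)) / (4 * (1 * 1))
      + 1 / 2) = (8 - 8 * Real.sqrt 2 + 2 * Real.pi) / Real.pi := by
    field_simp
    ring
  rw [← hval]
  exact T

set_option maxHeartbeats 2000000 in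
lemma key (m : ℕ) (hm : 1 ≤ m) :
    (4:ℝ) *
      ((∑ k ∈ Finset.Icc 1 ((4 * m) / 4),
          (Real.cos ((2 * (k : ℝ) - 1) * Real.pi / (2 * (4 * (m : ℝ)) - 2)) -
            Real.cos ((k : ℝ) * Real.pi / (4 * (m : ℝ) + 1)))) +
        ∑ k ∈ Finset.Icc ((4 * m) / 4 + 1) ((4 * m) / 2),
          (Real.cos ((k : ℝ) * Real.pi / (4 * (m : ℝ) + 1)) -
            Real.cos ((2 * (k : ℝ) - 1) * Real.pi / (2 * (4 * (m : ℝ)) - 2)))) = HH m := by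
  have hx : (1:ℝ) ≤ (m:ℝ) := by exact_mod_cast hm
  have hD1 : (2 * (4 * (m:ℝ)) - 2) ≠ 0 := by linarith
  have hD2 : (16 * (m:ℝ) - 4) ≠ 0 := by linarith
  have hD3 : (4 * (m:ℝ) + 1) ≠ 0 := by linarith
  have hD4 : (16 * (m:ℝ) + 4) ≠ 0 := by linarith
  have he1 : ee1 m ≠ 0 := ne_of_gt (ee1_pos hm)
  have he2 : ee2 m ≠ 0 := ne_of_gt (ee2_pos hm)
  have hs1 : Real.sin (2 * ee1 m) ≠ 0 :=
    ne_of_gt (Real.sin_pos_of_pos_of_lt_pi (by linarith [ee1_pos hm]) (ee1_lt hm))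
  have hs2 : Real.sin (2 * ee2 m) ≠ 0 :=
    ne_of_gt (Real.sin_pos_of_pos_of_lt_pi (by linarith [ee2_pos hm]) (ee2_lt hm))
  have h2s1 : (2 : ℝ) * Real.sin (2 * ee1 m) ≠ 0 := by positivity
  have h2s2 : (2 : ℝ) * Real.sin (2 * ee2 m) ≠ 0 := by positivity
  have hδ : ee2 m - ee1 m ≠ 0 := ne_of_lt (sub_neg.mpr (ee2_lt_ee1 hm))
  have he1small : ee1 m ≤ Real.pi / 12 := by
    unfold ee1
    apply div_le_div_of_nonneg_left Real.pi_pos.le (by norm_num) (by linarith)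
  have he2small : ee2 m ≤ Real.pi / 20 := by
    unfold ee2
    apply div_le_div_of_nonneg_left Real.pi_pos.le (by norm_num) (by linarith)
  have hcc : Real.cos (ee1 m + ee2 m) ≠ 0 := by
    apply ne_of_gt
    apply Real.cos_pos_of_mem_Ioo
    constructor
    · have := ee1_pos hm; have := ee2_pos hm
      nlinarith [Real.pi_pos]
    · nlinarith [Real.pi_pos]
  have hθa : Real.pi / (2 * (4 * (m:ℝ)) - 2) = 2 * ee1 m := by
    unfold ee1; rw [div_eq_iff hD1]; field_simp; ring
  have hθb : (Real.pi / (4 * (m:ℝ) + 1)) / 2 = 2 * ee2 m := by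
    unfold ee2; rw [div_div, div_eq_iff (by linarith : (4*(m:ℝ)+1) * 2 ≠ 0)]; field_simp; ring
  -- closed forms
  have key1 : ∀ M : ℕ, (∑ k ∈ Finset.Ioc 0 M,
      Real.cos ((2 * (k:ℝ) - 1) * Real.pi / (2 * (4 * (m:ℝ)) - 2)))
      = Real.sin (2 * (M:ℝ) * (2 * ee1 m)) / (2 * Real.sin (2 * ee1 m)) := by
    intro M
    rw [eq_div_iff h2s1, ← sumA (2 * ee1 m) M]
    congr 1
    apply Finset.sum_congr rfl
    intro k _
    rw [mul_div_assoc, hθa]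
  have key2 : ∀ M : ℕ, (∑ k ∈ Finset.Ioc 0 M,
      Real.cos ((k:ℝ) * Real.pi / (4 * (m:ℝ) + 1)))
      = (Real.sin (((M:ℝ) + 1/2) * (Real.pi / (4 * (m:ℝ) + 1))) - Real.sin (2 * ee2 m))
        / (2 * Real.sin (2 * ee2 m)) := by
    intro M
    have h := sumB (Real.pi / (4 * (m:ℝ) + 1)) M
    rw [hθb] at h
    rw [eq_div_iff h2s2, ← h]
    congr 1
    apply Finset.sum_congr rfl
    intro k _
    rw [mul_div_assoc]
  -- sine values
  have hv1 : Real.sin (2 * ((m : ℕ):ℝ) * (2 * ee1 m))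
      = Real.sqrt 2 / 2 * (Real.cos (ee1 m) + Real.sin (ee1 m)) := by
    rw [show 2 * ((m : ℕ):ℝ) * (2 * ee1 m) = Real.pi / 4 + ee1 m by
      have e : ee1 m * (16 * (m:ℝ) - 4) = Real.pi := by unfold ee1; exact div_mul_cancel₀ _ hD2
      linear_combination e / 4]
    rw [Real.sin_add, Real.sin_pi_div_four, Real.cos_pi_div_four]; ring
  have hv2 : Real.sin (2 * ((2 * m : ℕ):ℝ) * (2 * ee1 m)) = Real.cos (2 * ee1 m) := by
    push_cast
    rw [show 2 * (2 * (m:ℝ)) * (2 * ee1 m) = Real.pi / 2 + 2 * ee1 m by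
      have e : ee1 m * (16 * (m:ℝ) - 4) = Real.pi := by unfold ee1; exact div_mul_cancel₀ _ hD2
      linear_combination e / 2]
    rw [Real.sin_add, Real.sin_pi_div_two, Real.cos_pi_div_two]; ring
  have hv3 : Real.sin ((((m : ℕ):ℝ) + 1/2) * (Real.pi / (4 * (m:ℝ) + 1)))
      = Real.sqrt 2 / 2 * (Real.cos (ee2 m) + Real.sin (ee2 m)) := by
    rw [show (((m : ℕ):ℝ) + 1/2) * (Real.pi / (4 * (m:ℝ) + 1)) = Real.pi / 4 + ee2 m by
      unfold ee2; field_simp; ring]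
    rw [Real.sin_add, Real.sin_pi_div_four, Real.cos_pi_div_four]; ring
  have hv4 : Real.sin ((((2 * m : ℕ):ℝ) + 1/2) * (Real.pi / (4 * (m:ℝ) + 1))) = 1 := by
    push_cast
    rw [show (2 * (m:ℝ) + 1/2) * (Real.pi / (4 * (m:ℝ) + 1)) = Real.pi / 2 by
      field_simp; ring]
    exact Real.sin_pi_div_two
  -- index housekeeping
  have h4 : (4 * m) / 4 = m := by omega
  have h2 : (4 * m) / 2 = 2 * m := by omega
  have hIcc1 : Finset.Icc 1 m = Finset.Ioc 0 m := by rw [← Finset.Icc_add_one_left_eq_Ioc]; rfl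
  have hIcc2 : Finset.Icc (m + 1) (2 * m) = Finset.Ioc m (2 * m) := by
    rw [← Finset.Icc_add_one_left_eq_Ioc]
  rw [h4, h2, hIcc1, hIcc2, Finset.sum_sub_distrib, Finset.sum_sub_distrib]
  have hsplitA : (∑ k ∈ Finset.Ioc m (2*m),
      Real.cos ((2 * (k:ℝ) - 1) * Real.pi / (2 * (4 * (m:ℝ)) - 2)))
      = (∑ k ∈ Finset.Ioc 0 (2*m),
          Real.cos ((2 * (k:ℝ) - 1) * Real.pi / (2 * (4 * (m:ℝ)) - 2)))
        - ∑ k ∈ Finset.Ioc 0 m,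
            Real.cos ((2 * (k:ℝ) - 1) * Real.pi / (2 * (4 * (m:ℝ)) - 2)) :=
    eq_sub_of_add_eq' (Finset.sum_Ioc_consecutive _ (Nat.zero_le m) (by omega))
  have hsplitB : (∑ k ∈ Finset.Ioc m (2*m),
      Real.cos ((k:ℝ) * Real.pi / (4 * (m:ℝ) + 1)))
      = (∑ k ∈ Finset.Ioc 0 (2*m),
          Real.cos ((k:ℝ) * Real.pi / (4 * (m:ℝ) + 1)))
        - ∑ k ∈ Finset.Ioc 0 m,
            Real.cos ((k:ℝ) * Real.pi / (4 * (m:ℝ) + 1)) :=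
    eq_sub_of_add_eq' (Finset.sum_Ioc_consecutive _ (Nat.zero_le m) (by omega))
  rw [hsplitA, hsplitB, key1 m, key1 (2*m), key2 m, key2 (2*m), hv1, hv2, hv3, hv4]
  -- algebraic identities
  have hsd : Real.sin (ee2 m - ee1 m)
      = (Real.sin (2 * ee2 m) - Real.sin (2 * ee1 m)) / (2 * Real.cos (ee1 m + ee2 m)) := by
    rw [eq_div_iff (by positivity)]
    have h := Real.sin_sub_sin (2 * ee2 m) (2 * ee1 m)
    rw [show (2 * ee2 m - 2 * ee1 m) / 2 = ee2 m - ee1 m by ring,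
        show (2 * ee2 m + 2 * ee1 m) / 2 = ee1 m + ee2 m by ring] at h
    linarith
  have hpi : (-8 / Real.pi : ℝ) = (ee2 m - ee1 m) / (ee1 m * ee2 m) := by
    rw [div_eq_div_iff Real.pi_ne_zero (mul_ne_zero he1 he2)]
    unfold ee1 ee2
    field_simp
    ring
  unfold HH
  rw [hsd, hpi]
  field_simp
  ring


theorem stmt7 :
    Tendsto (fun m : ℕ =>
      (4 : ℝ) *
        ((∑ k ∈ Finset.Icc 1 ((4 * m) / 4),
            (Real.cos ((2 * (k : ℝ) - 1) * Real.pi / (2 * (4 * (m : ℝ)) - 2)) -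
              Real.cos ((k : ℝ) * Real.pi / (4 * (m : ℝ) + 1)))) +
          ∑ k ∈ Finset.Icc ((4 * m) / 4 + 1) ((4 * m) / 2),
            (Real.cos ((k : ℝ) * Real.pi / (4 * (m : ℝ) + 1)) -
              Real.cos ((2 * (k : ℝ) - 1) * Real.pi / (2 * (4 * (m : ℝ)) - 2)))))
      atTop (nhds ((8 - 8 * Real.sqrt 2 + 2 * Real.pi) / Real.pi)) := by
  apply tendsto_HH.congr'
  filter_upwards [eventually_ge_atTop 1] with m hm
  exact (key m hm).symm
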